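/- The equation 8 sin θ (1 − sin θ)² − cos θ (π − 2θ − sin 2θ) = 0 has a unique solution θ in the open interval (0, π/2). -/

import Mathlib

open Real Set

noncomputable def gfun (θ : ℝ) : ℝ :=
  8 * Real.sin θ * (1 - Real.sin θ) * Real.cos θ / (1 + Real.sin θ)
    - (Real.pi - 2*θ - Real.sin (2*θ))

noncomputable def thst : ℝ := Real.arcsin ((Real.sqrt 10 - 1)/3)

lemma sqrt10_gt : (3:ℝ) < Real.sqrt 10 := by
  nlinarith [Real.sq_sqrt (by norm_num : (10:ℝ) ≥ 0), Real.sqrt_nonneg 10]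

lemma sqrt10_lt : Real.sqrt 10 < 4 := by
  nlinarith [Real.sq_sqrt (by norm_num : (10:ℝ) ≥ 0), Real.sqrt_nonneg 10]

lemma sstar_pos : (0:ℝ) < (Real.sqrt 10 - 1)/3 := by linarith [sqrt10_gt]
lemma sstar_lt_one : (Real.sqrt 10 - 1)/3 < 1 := by linarith [sqrt10_lt]

lemma sin_thst : Real.sin thst = (Real.sqrt 10 - 1)/3 :=
  Real.sin_arcsin (by linarith [sstar_pos]) (le_of_lt sstar_lt_one)

lemma thst_pos : 0 < thst := Real.arcsin_pos.mpr sstar_pos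

lemma thst_lt : thst < Real.pi/2 := by
  exact Real.arcsin_lt_pi_div_two.mpr sstar_lt_one

lemma g_hasDerivAt {x : ℝ} (hx : 1 + Real.sin x ≠ 0) :
    HasDerivAt gfun
      (4*(1 - Real.sin x)*(3 - 2*Real.sin x - 3*(Real.sin x)^2)/(1 + Real.sin x)) x := by
  have hs := Real.hasDerivAt_sin x
  have hc := Real.hasDerivAt_cos x
  have h2 : HasDerivAt (fun θ : ℝ => Real.sin (2*θ)) (Real.cos (2*x) * 2) x := by
    have := (Real.hasDerivAt_sin (2*x)).comp x ((hasDerivAt_id x).const_mul 2)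
    simp only [mul_one] at this
    exact this
  have hA : HasDerivAt (fun θ => 8 * Real.sin θ * (1 - Real.sin θ) * Real.cos θ)
      (((8 * Real.cos x) * (1 - Real.sin x) + (8 * Real.sin x) * (0 - Real.cos x)) * Real.cos x
        + (8 * Real.sin x * (1 - Real.sin x)) * (-Real.sin x)) x :=
    ((hs.const_mul 8).mul ((hasDerivAt_const x (1:ℝ)).sub hs)).mul hc
  have hB : HasDerivAt (fun θ => 1 + Real.sin θ) (Real.cos x) x := by
    have := (hasDerivAt_const x (1:ℝ)).add hs
    rw [zero_add] at this
    exact this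
  have hq := hA.div hB hx
  have hrest : HasDerivAt (fun θ : ℝ => Real.pi - 2*θ - Real.sin (2*θ))
      ((0 - 2*1) - Real.cos (2*x) * 2) x := by
    exact ((hasDerivAt_const x Real.pi).sub ((hasDerivAt_id x).const_mul 2)).sub h2
  have htot := hq.sub hrest
  refine htot.congr_deriv ?_
  symm
  have hpy := Real.sin_sq_add_cos_sq x
  have hc2 : Real.cos (2*x) = 2*(Real.cos x)^2 - 1 := Real.cos_two_mul x
  rw [hc2]
  field_simp
  linear_combination (-12 + 8*Real.sin x + 4*(Real.sin x)^2) * hpy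

lemma one_add_sin_pos {x : ℝ} (hx0 : 0 ≤ x) (hx1 : x ≤ Real.pi/2) :
    0 < 1 + Real.sin x := by
  have : 0 ≤ Real.sin x :=
    Real.sin_nonneg_of_nonneg_of_le_pi hx0 (by linarith [Real.pi_pos])
  linarith

lemma g_cont : ContinuousOn gfun (Set.Icc 0 (Real.pi/2)) := by
  intro x hx
  exact (g_hasDerivAt (ne_of_gt (one_add_sin_pos hx.1 hx.2))).continuousAt.continuousWithinAt

lemma sin_lt_sstar {x : ℝ} (hx : x ∈ Set.Ioo 0 thst) :
    Real.sin x < (Real.sqrt 10 - 1)/3 := by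
  have h1 : x ∈ Set.Icc (-(Real.pi/2)) (Real.pi/2) :=
    ⟨by linarith [hx.1, Real.pi_pos], by linarith [hx.2, thst_lt]⟩
  have h2 : thst ∈ Set.Icc (-(Real.pi/2)) (Real.pi/2) :=
    ⟨by linarith [thst_pos, Real.pi_pos], le_of_lt thst_lt⟩
  calc Real.sin x < Real.sin thst := Real.strictMonoOn_sin h1 h2 hx.2
    _ = _ := sin_thst

lemma sin_gt_sstar {x : ℝ} (hx : x ∈ Set.Ioo thst (Real.pi/2)) :
    (Real.sqrt 10 - 1)/3 < Real.sin x := by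
  have h1 : x ∈ Set.Icc (-(Real.pi/2)) (Real.pi/2) :=
    ⟨by linarith [hx.1, thst_pos, Real.pi_pos], le_of_lt hx.2⟩
  have h2 : thst ∈ Set.Icc (-(Real.pi/2)) (Real.pi/2) :=
    ⟨by linarith [thst_pos, Real.pi_pos], le_of_lt thst_lt⟩
  calc (Real.sqrt 10 - 1)/3 = Real.sin thst := sin_thst.symm
    _ < Real.sin x := Real.strictMonoOn_sin h2 h1 hx.1

lemma g_mono : StrictMonoOn gfun (Set.Icc 0 thst) := by
  apply strictMonoOn_of_deriv_pos (convex_Icc 0 thst)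
  · exact g_cont.mono (Set.Icc_subset_Icc le_rfl (le_of_lt thst_lt))
  · intro x hx
    rw [interior_Icc] at hx
    have hxI : x ∈ Set.Ioo 0 (Real.pi/2) := ⟨hx.1, lt_trans hx.2 thst_lt⟩
    have hns : 0 < 1 + Real.sin x := one_add_sin_pos (le_of_lt hxI.1) (le_of_lt hxI.2)
    rw [(g_hasDerivAt (ne_of_gt hns)).deriv]
    have hslt : Real.sin x < (Real.sqrt 10 - 1)/3 := sin_lt_sstar hx
    have hsnn : 0 ≤ Real.sin x :=
      Real.sin_nonneg_of_nonneg_of_le_pi (le_of_lt hxI.1) (by linarith [hxI.2, Real.pi_pos])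
    have h10 : Real.sqrt 10 ^ 2 = 10 := Real.sq_sqrt (by norm_num)
    have hfac : 0 < 3 - 2*Real.sin x - 3*(Real.sin x)^2 := by
      nlinarith [Real.sqrt_nonneg 10]
    have h1s : 0 < 1 - Real.sin x := by linarith [sstar_lt_one]
    positivity

lemma g_anti : StrictAntiOn gfun (Set.Icc thst (Real.pi/2)) := by
  apply strictAntiOn_of_deriv_neg (convex_Icc thst (Real.pi/2))
  · exact g_cont.mono (Set.Icc_subset_Icc (le_of_lt thst_pos) le_rfl)
  · intro x hx
    rw [interior_Icc] at hx
    have hxI : x ∈ Set.Ioo 0 (Real.pi/2) := ⟨lt_trans thst_pos hx.1, hx.2⟩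
    have hns : 0 < 1 + Real.sin x := one_add_sin_pos (le_of_lt hxI.1) (le_of_lt hxI.2)
    rw [(g_hasDerivAt (ne_of_gt hns)).deriv]
    have hsgt : (Real.sqrt 10 - 1)/3 < Real.sin x := sin_gt_sstar hx
    have hs1 : Real.sin x < 1 := by
      have h1 : x ∈ Set.Icc (-(Real.pi/2)) (Real.pi/2) :=
        ⟨by linarith [hxI.1, Real.pi_pos], le_of_lt hxI.2⟩
      have h2 : Real.pi/2 ∈ Set.Icc (-(Real.pi/2)) (Real.pi/2) :=
        ⟨by linarith [Real.pi_pos], le_rfl⟩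
      have := Real.strictMonoOn_sin h1 h2 hxI.2
      simpa using this
    have h10 : Real.sqrt 10 ^ 2 = 10 := Real.sq_sqrt (by norm_num)
    have hfac : 3 - 2*Real.sin x - 3*(Real.sin x)^2 < 0 := by
      nlinarith [Real.sqrt_nonneg 10, sstar_pos]
    apply div_neg_of_neg_of_pos _ hns
    have h1s : 0 < 1 - Real.sin x := by linarith
    nlinarith

lemma g_zero : gfun 0 = -Real.pi := by
  simp [gfun]

lemma g_pi_div_two : gfun (Real.pi/2) = 0 := by
  have h2 : 2*(Real.pi/2) = Real.pi := by ring
  simp [gfun, h2]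

lemma g_thst_pos : 0 < gfun thst := by
  have := g_anti (Set.left_mem_Icc.mpr (le_of_lt thst_lt))
    (Set.right_mem_Icc.mpr (le_of_lt thst_lt)) thst_lt
  rwa [g_pi_div_two] at this

lemma f_eq_cos_mul {θ : ℝ} (h : 1 + Real.sin θ ≠ 0) :
    8 * Real.sin θ * (1 - Real.sin θ)^2
      - Real.cos θ * (Real.pi - 2*θ - Real.sin (2*θ)) = Real.cos θ * gfun θ := by
  have hpy := Real.sin_sq_add_cos_sq θ
  rw [gfun]
  field_simp
  ring_nf
  linear_combination (-8*Real.sin θ*(1 - Real.sin θ)) * hpy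

theorem stmt_18 :
    ∃! θ : ℝ, θ ∈ Set.Ioo 0 (Real.pi/2) ∧
      8 * Real.sin θ * (1 - Real.sin θ)^2
        - Real.cos θ * (Real.pi - 2*θ - Real.sin (2*θ)) = 0 := by
  have hsub : Set.Icc 0 thst ⊆ Set.Icc 0 (Real.pi/2) :=
    Set.Icc_subset_Icc le_rfl (le_of_lt thst_lt)
  -- existence of a root of gfun in (0, thst)
  have hivt := intermediate_value_Ioo (le_of_lt thst_pos) (g_cont.mono hsub)
  have h0mem : (0:ℝ) ∈ Set.Ioo (gfun 0) (gfun thst) := by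
    rw [g_zero]
    exact ⟨by linarith [Real.pi_pos], g_thst_pos⟩
  obtain ⟨θ₀, hθ₀mem, hgθ₀⟩ := hivt h0mem
  have hθ₀I : θ₀ ∈ Set.Ioo 0 (Real.pi/2) := ⟨hθ₀mem.1, lt_trans hθ₀mem.2 thst_lt⟩
  have hns₀ : 1 + Real.sin θ₀ ≠ 0 :=
    ne_of_gt (one_add_sin_pos (le_of_lt hθ₀I.1) (le_of_lt hθ₀I.2))
  refine ⟨θ₀, ⟨hθ₀I, ?_⟩, ?_⟩
  · rw [f_eq_cos_mul hns₀, hgθ₀, mul_zero]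
  · rintro y ⟨hyI, hy⟩
    have hnsy : 1 + Real.sin y ≠ 0 :=
      ne_of_gt (one_add_sin_pos (le_of_lt hyI.1) (le_of_lt hyI.2))
    rw [f_eq_cos_mul hnsy] at hy
    have hcy : 0 < Real.cos y := Real.cos_pos_of_mem_Ioo
      ⟨by linarith [hyI.1, Real.pi_pos], hyI.2⟩
    have hgy : gfun y = 0 := by
      rcases mul_eq_zero.mp hy with h | h
      · exact absurd h (ne_of_gt hcy)
      · exact h
    rcases le_or_gt y thst with hle | hlt
    · exact g_mono.injOn ⟨le_of_lt hyI.1, hle⟩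
        ⟨le_of_lt hθ₀mem.1, le_of_lt hθ₀mem.2⟩ (by rw [hgy, hgθ₀])
    · exfalso
      have := g_anti ⟨le_of_lt hlt, le_of_lt hyI.2⟩
        (Set.right_mem_Icc.mpr (le_of_lt thst_lt)) hyI.2
      rw [g_pi_div_two, hgy] at this
      exact lt_irrefl 0 this
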